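/- Let k ≥ 2 and let 𝔖 be a k-uniform set system with m ≥ 3 blocks. Then 𝔖 admits a (k−1)-shift universal cycle if and only if 𝔖 has an alternating hamiltonian cycle. -/

import Mathlib

/-- An alternating cycle through the set `B` of blocks: a cyclic ordering
`f : ZMod m → Finset ℕ` of all blocks of `B` (`m = B.card`) together with chosen
points `c i ∈ f i ∩ f (i+1)` such that `c i ≠ c (i+1)` for all `i`. -/
def IsAltCycleOn (B : Finset (Finset ℕ)) (m : ℕ)
    (f : ZMod m → Finset ℕ) (c : ZMod m → ℕ) : Prop :=
  m = B.card ∧ (∀ i, f i ∈ B) ∧ (∀ b ∈ B, ∃ i, f i = b) ∧ Function.Injective f ∧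
    (∀ i, c i ∈ f i ∧ c i ∈ f (i + 1)) ∧ ∀ i, c i ≠ c (i + 1)

/-- A set system (with block collection `A`) has an alternating hamiltonian cycle;
for a system with a single block the condition is taken to hold trivially. -/
def HasAltHamCycle (A : Finset (Finset ℕ)) : Prop :=
  A.card = 1 ∨ ∃ m f c, IsAltCycleOn A m f c

/-- The cycle is colorful: every point lying in the intersection of two distinct
blocks occurs as one of the chosen points `c i`. -/
def ColorfulOn (A : Finset (Finset ℕ)) (m : ℕ) (c : ZMod m → ℕ) : Prop :=
  ∀ x : ℕ, (∃ B ∈ A, ∃ B' ∈ A, B ≠ B' ∧ x ∈ B ∧ x ∈ B') → ∃ i, c i = x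

/-- A set system (with block collection `A`) is colorful alternating hamiltonian
(c.a.h.); for a system with a single block the condition is taken to hold trivially. -/
def HasCAHCycle (A : Finset (Finset ℕ)) : Prop :=
  A.card = 1 ∨ ∃ m f c, IsAltCycleOn A m f c ∧ ColorfulOn A m c
/-- A `(k−1)`-shift universal cycle for a `k`-uniform set system with point set `X`
and block collection `A` (`m = A.card`): a sequence `u` of points of `X` of length
`m(k−1)` (indexed by `ZMod (m*(k-1))`) such that the `m` sets
`{u ((k−1)i+1), u ((k−1)i+2), …, u ((k−1)i+k)}`, for `i = 0, 1, …, m−1`, are exactly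
the `m` blocks, each occurring exactly once. -/
def HasShiftUC (k : ℕ) (X : Finset ℕ) (A : Finset (Finset ℕ)) : Prop :=
  ∃ u : ZMod (A.card * (k - 1)) → ℕ, (∀ z, u z ∈ X) ∧
    let T : Fin A.card → Finset ℕ := fun i =>
      Finset.image
        (fun j : Fin k =>
          u (((k - 1) * (i : ℕ) + 1 + (j : ℕ) : ℕ) : ZMod (A.card * (k - 1))))
        Finset.univ
    (∀ i, T i ∈ A) ∧ Function.Injective T ∧ ∀ B ∈ A, ∃ i, T i = B

lemma shiftUC_fwd (k m : ℕ) (hk : 2 ≤ k) (hm : 3 ≤ m)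
    (u : ZMod (m * (k-1)) → ℕ) (A : Finset (Finset ℕ)) (hA : m = A.card)
    (huni : ∀ B ∈ A, B.card = k)
    (hT1 : ∀ i : Fin m, Finset.image
      (fun j : Fin k => u (((k-1)*(i:ℕ)+1+(j:ℕ) : ℕ))) Finset.univ ∈ A)
    (hT2 : Function.Injective (fun i : Fin m => Finset.image
      (fun j : Fin k => u (((k-1)*(i:ℕ)+1+(j:ℕ) : ℕ))) Finset.univ))
    (hT3 : ∀ B ∈ A, ∃ i : Fin m, Finset.image
      (fun j : Fin k => u (((k-1)*(i:ℕ)+1+(j:ℕ) : ℕ))) Finset.univ = B) :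
    ∃ f c, IsAltCycleOn A m f c := by
  haveI hmz : NeZero m := ⟨by omega⟩
  haveI hm1 : Fact (1 < m) := ⟨by omega⟩
  have key : ∀ i : ZMod m, (((k-1) * i.val + k : ℕ) : ZMod (m*(k-1)))
      = (((k-1) * (i+1).val + 1 : ℕ) : ZMod (m*(k-1))) := by
    intro i
    rw [ZMod.natCast_eq_natCast_iff]
    have h1 : (i+1).val ≡ i.val + 1 [MOD m] := by
      rw [ZMod.val_add, ZMod.val_one]
      exact Nat.mod_modEq _ _
    have h2 : (k-1) * (i.val + 1) + 1 ≡ (k-1) * (i+1).val + 1 [MOD (k-1)*m] :=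
      (Nat.ModEq.mul_left' (k-1) h1.symm).add_right 1
    have h3 : (k-1) * (i.val + 1) + 1 = (k-1) * i.val + k := by
      rw [Nat.mul_add, Nat.mul_one]; omega
    rw [mul_comm m (k-1), ← h3]
    exact h2
  refine ⟨fun i : ZMod m => Finset.image
      (fun j : Fin k => u (((k-1) * i.val + 1 + (j:ℕ) : ℕ))) Finset.univ,
    fun i : ZMod m => u (((k-1) * i.val + k : ℕ)),
    hA, ?_, ?_, ?_, ?_, ?_⟩
  · intro i
    exact hT1 ⟨i.val, i.val_lt⟩
  · intro b hb
    obtain ⟨i', hi'⟩ := hT3 b hb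
    refine ⟨((i' : ℕ) : ZMod m), ?_⟩
    show Finset.image
      (fun j : Fin k => u (((k-1) * (((i' : ℕ) : ZMod m)).val + 1 + (j:ℕ) : ℕ))) Finset.univ = b
    rw [ZMod.val_natCast_of_lt i'.isLt]
    exact hi'
  · intro a b hab
    have h := hT2 (a₁ := ⟨a.val, a.val_lt⟩) (a₂ := ⟨b.val, b.val_lt⟩) hab
    exact ZMod.val_injective _ (congrArg Fin.val h)
  · intro i
    constructor
    · refine Finset.mem_image.mpr ⟨⟨k-1, by omega⟩, Finset.mem_univ _, ?_⟩
      show u (((k-1) * i.val + 1 + (k-1) : ℕ)) = u (((k-1) * i.val + k : ℕ))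
      exact congrArg (fun t : ℕ => u t) (by omega)
    · refine Finset.mem_image.mpr ⟨⟨0, by omega⟩, Finset.mem_univ _, ?_⟩
      show u (((k-1) * (i+1).val + 1 + 0 : ℕ)) = u (((k-1) * i.val + k : ℕ))
      rw [Nat.add_zero, ← key i]
  · intro i hc
    have hAmem : Finset.image
        (fun j : Fin k => u (((k-1) * (i+1).val + 1 + (j:ℕ) : ℕ))) Finset.univ ∈ A :=
      hT1 ⟨(i+1).val, (i+1).val_lt⟩
    have hinj : Set.InjOn
        (fun j : Fin k => u (((k-1) * (i+1).val + 1 + (j:ℕ) : ℕ)))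
        (Finset.univ : Finset (Fin k)) := by
      apply Finset.card_image_iff.mp
      rw [huni _ hAmem, Finset.card_univ, Fintype.card_fin]
    have h0 : u (((k-1) * i.val + k : ℕ)) = u (((k-1) * (i+1).val + 1 + ((⟨0, by omega⟩ : Fin k) : ℕ) : ℕ)) := by
      show u (((k-1) * i.val + k : ℕ)) = u (((k-1) * (i+1).val + 1 + 0 : ℕ))
      rw [Nat.add_zero, key i]
    have h1 : u (((k-1) * (i+1).val + k : ℕ)) = u (((k-1) * (i+1).val + 1 + ((⟨k-1, by omega⟩ : Fin k) : ℕ) : ℕ)) := by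
      show u (((k-1) * (i+1).val + k : ℕ)) = u (((k-1) * (i+1).val + 1 + (k-1) : ℕ))
      exact congrArg (fun t : ℕ => u t) (by omega)
    have heq : (⟨0, by omega⟩ : Fin k) = ⟨k-1, by omega⟩ :=
      hinj (Finset.mem_coe.mpr (Finset.mem_univ _)) (Finset.mem_coe.mpr (Finset.mem_univ _))
        (h0.symm.trans (hc.trans h1))
    have := congrArg Fin.val heq
    simp only at this
    omega

lemma shiftUC_bwd (k m : ℕ) (hk : 2 ≤ k) (hm : 3 ≤ m)
    (X : Finset ℕ) (A : Finset (Finset ℕ))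
    (huniform : ∀ B ∈ A, B ⊆ X ∧ B.card = k)
    (f : ZMod m → Finset ℕ) (c : ZMod m → ℕ)
    (halt : IsAltCycleOn A m f c) :
    ∃ u : ZMod (m * (k-1)) → ℕ, (∀ z, u z ∈ X) ∧
      (∀ i : Fin m, Finset.image
        (fun j : Fin k => u (((k-1)*(i:ℕ)+1+(j:ℕ) : ℕ))) Finset.univ ∈ A) ∧
      Function.Injective (fun i : Fin m => Finset.image
        (fun j : Fin k => u (((k-1)*(i:ℕ)+1+(j:ℕ) : ℕ))) Finset.univ) ∧
      ∀ B ∈ A, ∃ i : Fin m, Finset.image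
        (fun j : Fin k => u (((k-1)*(i:ℕ)+1+(j:ℕ) : ℕ))) Finset.univ = B := by
  obtain ⟨hAcard, hf1, hf2, hf3, hc1, hc2⟩ := halt
  haveI hmz : NeZero m := ⟨by omega⟩
  haveI hNz : NeZero (m * (k-1)) := ⟨Nat.mul_ne_zero (by omega) (by omega)⟩
  have hk1 : 0 < k - 1 := by omega
  have hN1 : 1 ≤ m * (k-1) := Nat.one_le_iff_ne_zero.mpr hNz.out
  -- basic facts about the chosen points
  have hcne : ∀ i : ZMod m, c (i - 1) ≠ c i := by
    intro i
    have := hc2 (i - 1)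
    rwa [sub_add_cancel] at this
  have hcmem1 : ∀ i : ZMod m, c (i - 1) ∈ f i := by
    intro i
    have := (hc1 (i - 1)).2
    rwa [sub_add_cancel] at this
  have hcmem2 : ∀ i : ZMod m, c i ∈ f i := fun i => (hc1 i).1
  -- the middle list for each block
  have hLlen : ∀ i : ZMod m,
      (Finset.sort (f i \ {c (i-1), c i}) (· ≤ ·)).length = k - 2 := by
    intro i
    rw [Finset.length_sort, Finset.card_sdiff_of_subset (by
      intro x hx
      simp only [Finset.mem_insert, Finset.mem_singleton] at hx
      rcases hx with h | h
      · exact h ▸ hcmem1 i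
      · exact h ▸ hcmem2 i), Finset.card_pair (hcne i), (huniform _ (hf1 i)).2]
  -- the window function
  set w : ZMod m → ℕ → ℕ := fun i r =>
    if r = 0 then c (i-1) else if r = k-1 then c i
    else (Finset.sort (f i \ {c (i-1), c i}) (· ≤ ·)).getD (r-1) 0 with hwdef
  have hw0 : ∀ i : ZMod m, w i 0 = c (i-1) := fun i => rfl
  have hwk : ∀ i : ZMod m, w i (k-1) = c i := by
    intro i
    show (if k-1 = 0 then c (i-1) else if k-1 = k-1 then c i
      else (Finset.sort (f i \ {c (i-1), c i}) (· ≤ ·)).getD (k-1-1) 0) = c i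
    rw [if_neg (by omega : ¬(k-1 = 0)), if_pos rfl]
  have hwmid : ∀ (i : ZMod m) (r : ℕ), r ≠ 0 → r ≠ k-1 →
      w i r = (Finset.sort (f i \ {c (i-1), c i}) (· ≤ ·)).getD (r-1) 0 := by
    intro i r h0 h1
    show (if r = 0 then c (i-1) else if r = k-1 then c i
      else (Finset.sort (f i \ {c (i-1), c i}) (· ≤ ·)).getD (r-1) 0) = _
    rw [if_neg h0, if_neg h1]
  have hwmem : ∀ (i : ZMod m) (r : ℕ), r < k → w i r ∈ f i := by
    intro i r hr
    by_cases h0 : r = 0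
    · rw [h0, hw0]; exact hcmem1 i
    by_cases h1 : r = k-1
    · rw [h1, hwk]; exact hcmem2 i
    · rw [hwmid i r h0 h1]
      have hlt : r - 1 < (Finset.sort (f i \ {c (i-1), c i}) (· ≤ ·)).length := by
        rw [hLlen i]; omega
      rw [List.getD_eq_getElem _ _ hlt]
      exact (Finset.mem_sdiff.mp ((Finset.mem_sort (α := ℕ) (· ≤ ·)).mp
        (List.getElem_mem hlt))).1
  -- each window enumerates the block exactly
  have himg : ∀ i : ZMod m,
      Finset.image (fun j : Fin k => w i (j : ℕ)) Finset.univ = f i := by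
    intro i
    apply Finset.ext
    intro x
    simp only [Finset.mem_image, Finset.mem_univ, true_and]
    constructor
    · rintro ⟨j, rfl⟩
      exact hwmem i j.val j.isLt
    · intro hx
      by_cases h0 : x = c (i-1)
      · exact ⟨⟨0, by omega⟩, by rw [show ((⟨0, by omega⟩ : Fin k) : ℕ) = 0 from rfl, hw0, h0]⟩
      by_cases h1 : x = c i
      · exact ⟨⟨k-1, by omega⟩, by
          rw [show ((⟨k-1, by omega⟩ : Fin k) : ℕ) = k-1 from rfl, hwk, h1]⟩
      · have hx' : x ∈ Finset.sort (f i \ {c (i-1), c i}) (· ≤ ·) := by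
          rw [Finset.mem_sort]
          simp only [Finset.mem_sdiff, Finset.mem_insert, Finset.mem_singleton]
          exact ⟨hx, by tauto⟩
        obtain ⟨t, ht, hget⟩ := List.mem_iff_getElem.mp hx'
        have ht' : t < k - 2 := by rw [hLlen i] at ht; omega
        refine ⟨⟨t+1, by omega⟩, ?_⟩
        rw [show ((⟨t+1, by omega⟩ : Fin k) : ℕ) = t+1 from rfl,
          hwmid i (t+1) (by omega) (by omega)]
        rw [List.getD_eq_getElem _ _ (by rw [hLlen i]; omega)]
        simpa using hget
  -- the universal cycle
  set u0 : ZMod (m * (k-1)) → ℕ := fun z =>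
    w ((((z.val + (m*(k-1)-1)) % (m*(k-1)) / (k-1) : ℕ)) : ZMod m)
      ((z.val + (m*(k-1)-1)) % (m*(k-1)) % (k-1)) with hu0
  have hstep : ∀ a : ℕ, ((a+1) % (m*(k-1)) + (m*(k-1)-1)) % (m*(k-1)) = a % (m*(k-1)) := by
    intro a
    rw [Nat.mod_add_mod, show a + 1 + (m*(k-1)-1) = a + m*(k-1) by omega, Nat.add_mod_right]
  have hmain : ∀ (idx : Fin m) (j : Fin k),
      u0 (((k-1)*(idx:ℕ)+1+(j:ℕ) : ℕ)) = w ((idx:ℕ) : ZMod m) (j:ℕ) := by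
    intro idx j
    show w (((((((k-1)*(idx:ℕ)+1+(j:ℕ) : ℕ) : ZMod (m*(k-1))).val + (m*(k-1)-1)) % (m*(k-1)) / (k-1) : ℕ)) : ZMod m)
      (((((k-1)*(idx:ℕ)+1+(j:ℕ) : ℕ) : ZMod (m*(k-1))).val + (m*(k-1)-1)) % (m*(k-1)) % (k-1))
      = w ((idx:ℕ) : ZMod m) (j:ℕ)
    rw [ZMod.val_natCast, show (k-1)*(idx:ℕ)+1+(j:ℕ) = ((k-1)*(idx:ℕ)+(j:ℕ)) + 1 by omega,
      hstep ((k-1)*(idx:ℕ)+(j:ℕ))]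
    by_cases hj : (j:ℕ) < k-1
    · have ha : (k-1)*(idx:ℕ)+(j:ℕ) < m*(k-1) := by
        have h1 : (k-1)*(idx:ℕ)+(j:ℕ) < (k-1)*((idx:ℕ)+1) := by
          rw [Nat.mul_add, Nat.mul_one]; omega
        have h2 : (k-1)*((idx:ℕ)+1) ≤ (k-1)*m := Nat.mul_le_mul_left _ (by omega)
        rw [mul_comm m (k-1)]; omega
      rw [Nat.mod_eq_of_lt ha, Nat.mul_add_div hk1, Nat.div_eq_of_lt hj, Nat.add_zero,
        Nat.mul_add_mod, Nat.mod_eq_of_lt hj]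
    · have hj' : (j:ℕ) = k-1 := by have := j.isLt; omega
      have ha : (k-1)*(idx:ℕ)+(j:ℕ) = (k-1)*((idx:ℕ)+1) := by
        rw [Nat.mul_add, Nat.mul_one]; omega
      rw [ha, hj']
      by_cases hi : (idx:ℕ)+1 < m
      · have halt : (k-1)*((idx:ℕ)+1) < m*(k-1) := by
          rw [mul_comm m (k-1)]
          exact (Nat.mul_lt_mul_left hk1).mpr hi
        rw [Nat.mod_eq_of_lt halt, Nat.mul_div_cancel_left _ hk1, Nat.mul_mod_right,
          hw0, hwk]
        congr 1
        push_cast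
        ring
      · have hi' : (idx:ℕ)+1 = m := by have := idx.isLt; omega
        rw [hi', mul_comm (k-1) m, Nat.mod_self, Nat.zero_div, Nat.zero_mod, hw0, hwk]
        congr 1
        rw [show (idx:ℕ) = m-1 by omega, Nat.cast_sub (by omega), ZMod.natCast_self,
          Nat.cast_one, Nat.cast_zero]
  have hTimg : ∀ idx : Fin m, Finset.image
      (fun j : Fin k => u0 (((k-1)*(idx:ℕ)+1+(j:ℕ) : ℕ))) Finset.univ
      = f ((idx:ℕ) : ZMod m) := by
    intro idx
    rw [show (fun j : Fin k => u0 (((k-1)*(idx:ℕ)+1+(j:ℕ) : ℕ) : ZMod (m*(k-1))))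
      = fun j : Fin k => w ((idx:ℕ) : ZMod m) (j:ℕ) from funext (hmain idx)]
    exact himg _
  refine ⟨u0, ?_, ?_, ?_, ?_⟩
  · intro z
    have hr : (z.val + (m*(k-1)-1)) % (m*(k-1)) % (k-1) < k :=
      lt_of_lt_of_le (Nat.mod_lt _ hk1) (by omega)
    exact (huniform _ (hf1 _)).1 (hwmem _ _ hr)
  · intro idx
    rw [hTimg idx]
    exact hf1 _
  · intro a b hab
    simp only at hab
    rw [hTimg a, hTimg b] at hab
    have := congrArg ZMod.val (hf3 hab)
    rw [ZMod.val_natCast_of_lt a.isLt, ZMod.val_natCast_of_lt b.isLt] at this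
    exact Fin.ext this
  · intro B hB
    obtain ⟨i, hfi⟩ := hf2 B hB
    refine ⟨⟨i.val, i.val_lt⟩, ?_⟩
    rw [hTimg ⟨i.val, i.val_lt⟩]
    show f ((i.val : ℕ) : ZMod m) = B
    rw [ZMod.natCast_rightInverse i]
    exact hfi

/-- For `k ≥ 2`, a `k`-uniform set system with `m ≥ 3` blocks admits a `(k−1)`-shift
universal cycle if and only if it has an alternating hamiltonian cycle. -/
theorem shiftUC_iff_altHamCycle (k : ℕ) (hk : 2 ≤ k)
    (X : Finset ℕ) (A : Finset (Finset ℕ))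
    (huniform : ∀ B ∈ A, B ⊆ X ∧ B.card = k) (hm : 3 ≤ A.card) :
    HasShiftUC k X A ↔ HasAltHamCycle A := by
  constructor
  · rintro ⟨u, hXu, hT1, hT2, hT3⟩
    right
    exact ⟨A.card, shiftUC_fwd k A.card hk hm u A rfl
      (fun B hB => (huniform B hB).2) hT1 hT2 hT3⟩
  · rintro (h1 | ⟨m', f, c, halt⟩)
    · omega
    · have hm' : m' = A.card := halt.1
      subst hm'
      obtain ⟨u, h1, h2, h3, h4⟩ := shiftUC_bwd k A.card hk hm X A huniform f c halt
      exact ⟨u, h1, h2, h3, h4⟩
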